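/- A continuous map f : I → I of a closed bounded interval into itself has a periodic point of least period 2 if and only if there exists a point ξ ∈ I such that f(ξ) ≠ ξ and ξ belongs to f applied to the closed interval with endpoints ξ and f(ξ). -/

import Mathlib

open Set

private lemma exists_zero' (φ : ℝ → ℝ) (c d : ℝ)
    (hφ : ContinuousOn φ (Set.uIcc c d)) (h1 : φ c ≤ 0) (h2 : 0 ≤ φ d) :
    ∃ e ∈ Set.uIcc c d, φ e = 0 := by
  have h0 : (0:ℝ) ∈ Set.uIcc (φ c) (φ d) := Set.mem_uIcc.mpr (Or.inl ⟨h1, h2⟩)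
  obtain ⟨e, he, h⟩ := intermediate_value_uIcc hφ h0
  exact ⟨e, he, h⟩

private lemma key (a b : ℝ) (hab : a ≤ b) (f : ℝ → ℝ)
    (hc : ContinuousOn f (Set.Icc a b))
    (hmaps : Set.MapsTo f (Set.Icc a b) (Set.Icc a b))
    (ξ η : ℝ) (hξ : ξ ∈ Set.Icc a b)
    (hξlt : ξ < f ξ) (hη : η ∈ Set.Icc ξ (f ξ)) (hfη : f η = ξ) :
    ∃ x ∈ Set.Icc a b, f (f x) = x ∧ f x ≠ x := by
  by_contra hcon
  push_neg at hcon
  have hfξmem : f ξ ∈ Set.Icc a b := hmaps hξ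
  have hηmem : η ∈ Set.Icc a b := ⟨hξ.1.trans hη.1, hη.2.trans hfξmem.2⟩
  have hIccu : Set.uIcc a b = Set.Icc a b := uIcc_of_le hab
  have hsub : ∀ u v : ℝ, u ∈ Set.Icc a b → v ∈ Set.Icc a b →
      Set.uIcc u v ⊆ Set.Icc a b := by
    intro u v hu hv
    rw [← hIccu] at hu hv ⊢
    exact uIcc_subset_uIcc hu hv
  set φ : ℝ → ℝ := fun t => f t - t with hφdef
  have hφc : ContinuousOn φ (Set.Icc a b) := hc.sub continuousOn_id
  have hff : ContinuousOn (fun t => f (f t)) (Set.Icc a b) := by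
    have := hc.comp hc hmaps
    exact this
  set χ : ℝ → ℝ := fun t => f (f t) - t with hχdef
  have hχc : ContinuousOn χ (Set.Icc a b) := hff.sub continuousOn_id
  -- ξ < η
  have hξη : ξ < η := by
    rcases eq_or_lt_of_le hη.1 with h | h
    · exfalso; rw [← h] at hfη; exact (ne_of_gt hξlt) hfη
    · exact h
  -- η < f ξ
  have hηfξ : η < f ξ := by
    rcases eq_or_lt_of_le hη.2 with h | h
    · exfalso
      have h2 : f (f η) = η := by rw [hfη, ← h]
      have := hcon η hηmem h2
      rw [hfη] at this
      exact absurd this (ne_of_lt hξη)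
    · exact h
  -- fixed point set in [ξ, η]
  set S : Set ℝ := {t | t ∈ Set.Icc ξ η ∧ f t = t} with hSdef
  have hSne : S.Nonempty := by
    have hu : Set.uIcc η ξ ⊆ Set.Icc a b := hsub η ξ hηmem hξ
    obtain ⟨e, he, h0⟩ := exists_zero' φ η ξ (hφc.mono hu)
      (by simp only [hφdef]; rw [hfη]; linarith)
      (by simp only [hφdef]; linarith)
    refine ⟨e, ?_, by simpa [hφdef, sub_eq_zero] using h0⟩
    rw [uIcc_of_ge hξη.le] at he
    exact he
  have hSeq : S = Set.Icc ξ η ∩ φ ⁻¹' {0} := by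
    ext t
    simp only [hSdef, Set.mem_setOf_eq, Set.mem_inter_iff, Set.mem_preimage,
      Set.mem_singleton_iff, hφdef, sub_eq_zero]
  have hSclosed : IsClosed S := by
    rw [hSeq]
    exact (hφc.mono (Set.Icc_subset_Icc hξ.1 hηmem.2)).preimage_isClosed_of_isClosed
      isClosed_Icc isClosed_singleton
  have hScompact : IsCompact S :=
    isCompact_Icc.of_isClosed_subset hSclosed (fun t ht => ht.1)
  set Z := sSup S with hZdef
  have hZS : Z ∈ S := hScompact.sSup_mem hSne
  have hZub : ∀ t ∈ S, t ≤ Z := fun t ht => le_csSup hScompact.bddAbove ht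
  have hξZ : ξ < Z := by
    rcases eq_or_lt_of_le hZS.1.1 with h | h
    · exfalso; have h2 := hZS.2; rw [← h] at h2; exact (ne_of_gt hξlt) h2
    · exact h
  have hZη : Z < η := by
    rcases eq_or_lt_of_le hZS.1.2 with h | h
    · exfalso; have h2 := hZS.2; rw [h, hfη] at h2; exact (ne_of_lt hξη) h2
    · exact h
  have hZmem : Z ∈ Set.Icc a b := ⟨hξ.1.trans hZS.1.1, hZS.1.2.trans hηmem.2⟩
  have hχη : 0 < χ η := by
    have h1 : f (f η) = f ξ := by rw [hfη]
    simp only [hχdef]; rw [h1]; linarith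
  have hφη : φ η < 0 := by simp only [hφdef]; rw [hfη]; linarith
  -- fixed point set in [η, b]
  set T : Set ℝ := {t | t ∈ Set.Icc η b ∧ f t = t} with hTdef
  rcases T.eq_empty_or_nonempty with hT | hT
  · -- no fixed points right of η : contradiction at b
    have hbmem : b ∈ Set.Icc a b := ⟨hab, le_refl b⟩
    have hχb : χ b ≤ 0 := by
      have := (hmaps (hmaps hbmem)).2
      simp only [hχdef]; linarith
    obtain ⟨e, he, h0⟩ := exists_zero' χ b η (hχc.mono (hsub b η hbmem hηmem))
      hχb hχη.le
    rw [uIcc_of_ge hηmem.2] at he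
    have hemem : e ∈ Set.Icc a b := ⟨hηmem.1.trans he.1, he.2⟩
    have hffe : f (f e) = e := by
      have : f (f e) - e = 0 := h0
      linarith
    have hfe : f e = e := hcon e hemem hffe
    have : e ∈ T := ⟨he, hfe⟩
    rw [hT] at this
    exact Set.notMem_empty e this
  · have hTeq : T = Set.Icc η b ∩ φ ⁻¹' {0} := by
      ext t
      simp only [hTdef, Set.mem_setOf_eq, Set.mem_inter_iff, Set.mem_preimage,
        Set.mem_singleton_iff, hφdef, sub_eq_zero]
    have hTclosed : IsClosed T := by
      rw [hTeq]
      exact (hφc.mono (Set.Icc_subset_Icc hηmem.1 (le_refl b))).preimage_isClosed_of_isClosed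
        isClosed_Icc isClosed_singleton
    have hTcompact : IsCompact T :=
      isCompact_Icc.of_isClosed_subset hTclosed (fun t ht => ht.1)
    set z₂ := sInf T with hz₂def
    have hz₂T : z₂ ∈ T := hTcompact.sInf_mem hT
    have hz₂lb : ∀ t ∈ T, z₂ ≤ t := fun t ht => csInf_le hTcompact.bddBelow ht
    have hz₂mem : z₂ ∈ Set.Icc a b := ⟨hηmem.1.trans hz₂T.1.1, hz₂T.1.2⟩
    have hηz₂ : η < z₂ := by
      rcases eq_or_lt_of_le hz₂T.1.1 with h | h
      · exfalso; have h2 := hz₂T.2; rw [← h, hfη] at h2; exact (ne_of_lt hξη) h2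
      · exact h
    have hNF : ∀ e : ℝ, Z < e → e < z₂ → f e = e → False := by
      intro e h1 h2 hfe
      rcases le_or_gt e η with h3 | h3
      · have heS : e ∈ S := ⟨⟨hξZ.le.trans h1.le, h3⟩, hfe⟩
        exact absurd (hZub e heS) (not_le.mpr h1)
      · have heT : e ∈ T := ⟨⟨h3.le, h2.le.trans hz₂T.1.2⟩, hfe⟩
        exact absurd (hz₂lb e heT) (not_le.mpr h2)
    have hmemIoo : ∀ t ∈ Set.Ioo Z z₂, t ∈ Set.Icc a b := fun t ht =>
      ⟨hZmem.1.trans ht.1.le, ht.2.le.trans hz₂mem.2⟩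
    -- f t < t on (Z, z₂)
    have hA : ∀ t ∈ Set.Ioo Z z₂, f t < t := by
      intro t ht
      by_contra h
      push_neg at h
      obtain ⟨e, he, h0⟩ := exists_zero' φ η t
        (hφc.mono (hsub η t hηmem (hmemIoo t ht))) hφη.le
        (by simp only [hφdef]; linarith)
      have hfe : f e = e := by
        have : f e - e = 0 := h0
        linarith
      rcases Set.mem_uIcc.mp he with ⟨h1, h2⟩ | ⟨h1, h2⟩
      · exact hNF e (lt_of_lt_of_le hZη h1) (lt_of_le_of_lt h2 ht.2) hfe
      · exact hNF e (lt_of_lt_of_le ht.1 h1) (lt_of_le_of_lt h2 hηz₂) hfe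
    -- t < f (f t) on (Z, z₂)
    have hB : ∀ t ∈ Set.Ioo Z z₂, t < f (f t) := by
      intro t ht
      by_contra h
      push_neg at h
      obtain ⟨e, he, h0⟩ := exists_zero' χ t η
        (hχc.mono (hsub t η (hmemIoo t ht) hηmem))
        (by simp only [hχdef]; linarith) hχη.le
      have hemem : e ∈ Set.Icc a b := (hsub t η (hmemIoo t ht) hηmem) he
      have hffe : f (f e) = e := by
        have : f (f e) - e = 0 := h0
        linarith
      have hfe : f e = e := hcon e hemem hffe
      rcases Set.mem_uIcc.mp he with ⟨h1, h2⟩ | ⟨h1, h2⟩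
      · exact hNF e (lt_of_lt_of_le ht.1 h1) (lt_of_le_of_lt h2 hηz₂) hfe
      · exact hNF e (lt_of_lt_of_le hZη h1) (lt_of_le_of_lt h2 ht.2) hfe
    -- f t < Z on (Z, z₂)
    have hC : ∀ t ∈ Set.Ioo Z z₂, f t < Z := by
      intro t ht
      have h1 := hA t ht
      rcases lt_trichotomy (f t) Z with h | h | h
      · exact h
      · exfalso
        have h2 := hB t ht
        rw [h, hZS.2] at h2
        exact absurd h2 (not_lt.mpr ht.1.le)
      · exfalso
        have hft : f t ∈ Set.Ioo Z z₂ := ⟨h, h1.trans ht.2⟩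
        have h3 := hA (f t) hft
        have h2 := hB t ht
        linarith
    -- final contradiction via midpoint
    have hZz₂ : Z < z₂ := hZη.trans hηz₂
    set m := (Z + z₂)/2 with hmdef
    have hm1 : Z < m := by simp only [hmdef]; linarith
    have hm2 : m < z₂ := by simp only [hmdef]; linarith
    obtain ⟨e, he, h0⟩ := exists_zero' (fun t => f t - m) η z₂
      ((hc.mono (hsub η z₂ hηmem hz₂mem)).sub continuousOn_const)
      (by show f η - m ≤ 0; rw [hfη]; linarith)
      (by show 0 ≤ f z₂ - m; rw [hz₂T.2]; linarith)
    have hfe : f e = m := by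
      have : f e - m = 0 := h0
      linarith
    rcases Set.mem_uIcc.mp he with ⟨h1, h2⟩ | ⟨h1, h2⟩
    · have hez : e < z₂ := by
        rcases eq_or_lt_of_le h2 with hh | hh
        · exfalso; rw [hh, hz₂T.2] at hfe; linarith
        · exact hh
      have := hC e ⟨hZη.trans_le h1, hez⟩
      rw [hfe] at this
      linarith
    · linarith

theorem period_two_iff (a b : ℝ) (hab : a ≤ b) (f : ℝ → ℝ)
    (hc : ContinuousOn f (Set.Icc a b))
    (hmaps : Set.MapsTo f (Set.Icc a b) (Set.Icc a b)) :
    (∃ x ∈ Set.Icc a b, f^[2] x = x ∧ f x ≠ x) ↔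
      (∃ ξ ∈ Set.Icc a b, f ξ ≠ ξ ∧ ξ ∈ f '' Set.uIcc ξ (f ξ)) := by
  have hit : ∀ y : ℝ, f^[2] y = f (f y) := fun y => by
    rw [Function.iterate_succ_apply', Function.iterate_one]
  constructor
  · rintro ⟨x, hx, h2, hne⟩
    refine ⟨x, hx, hne, ⟨f x, Set.right_mem_uIcc, ?_⟩⟩
    rw [← hit]; exact h2
  · rintro ⟨ξ, hξ, hne, η, hη, hfη⟩
    rcases hne.lt_or_gt with h | h
    · -- f ξ < ξ : reflect through t ↦ a + b - t
      set F : ℝ → ℝ := fun t => a + b - f (a + b - t) with hFdef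
      have hr : ContinuousOn (fun t : ℝ => a + b - t) (Set.Icc a b) :=
        (continuous_const.sub continuous_id).continuousOn
      have hrmaps : Set.MapsTo (fun t : ℝ => a + b - t) (Set.Icc a b) (Set.Icc a b) := by
        intro t ht
        constructor
        · simp only; linarith [ht.2]
        · simp only; linarith [ht.1]
      have hFc : ContinuousOn F (Set.Icc a b) := by
        have h1 : ContinuousOn (fun t => f (a + b - t)) (Set.Icc a b) := by
          have := hc.comp hr hrmaps
          exact this
        exact continuousOn_const.sub h1
      have hFmaps : Set.MapsTo F (Set.Icc a b) (Set.Icc a b) := by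
        intro t ht
        have h1 := hmaps (hrmaps ht)
        constructor
        · simp only [hFdef]; linarith [h1.2]
        · simp only [hFdef]; linarith [h1.1]
      have hξ' : a + b - ξ ∈ Set.Icc a b := hrmaps hξ
      have hFξ' : F (a + b - ξ) = a + b - f ξ := by
        simp only [hFdef]
        rw [show a + b - (a + b - ξ) = ξ by ring]
      have hlt' : a + b - ξ < F (a + b - ξ) := by rw [hFξ']; linarith
      have hηi : η ∈ Set.Icc (f ξ) ξ := by rw [← uIcc_of_ge h.le]; exact hη
      have hη' : a + b - η ∈ Set.Icc (a + b - ξ) (F (a + b - ξ)) := by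
        rw [hFξ']
        constructor
        · linarith [hηi.2]
        · linarith [hηi.1]
      have hFη' : F (a + b - η) = a + b - ξ := by
        simp only [hFdef]
        rw [show a + b - (a + b - η) = η by ring, hfη]
      obtain ⟨x, hx, h2, hne2⟩ := key a b hab F hFc hFmaps
        (a + b - ξ) (a + b - η) hξ' hlt' hη' hFη'
      refine ⟨a + b - x, hrmaps hx, ?_, ?_⟩
      · rw [hit]
        have e1 : F x = a + b - f (a + b - x) := rfl
        have e2 : F (F x) = a + b - f (a + b - F x) := rfl
        have e3 : a + b - F x = f (a + b - x) := by rw [e1]; ring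
        rw [e2, e3] at h2
        linarith [h2]
      · intro hcontra
        apply hne2
        have e1 : F x = a + b - f (a + b - x) := rfl
        rw [e1, hcontra]
        ring
    · have hηi : η ∈ Set.Icc ξ (f ξ) := by rw [← uIcc_of_le h.le]; exact hη
      obtain ⟨x, hx, h2, hne2⟩ := key a b hab f hc hmaps ξ η hξ h hηi hfη
      exact ⟨x, hx, by rw [hit]; exact h2, hne2⟩
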